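/- Let α ∈ {+1, −1}, and let A and A + α Z Zᵀ be n×n real symmetric positive definite matrices, where Z is n×k. Let V = A⁻¹ Z (I_k + α Zᵀ A⁻¹ Z)^{−1/2} (the matrix I_k + α Zᵀ A⁻¹ Z being positive definite under these hypotheses). Then the matrix C = −α((A + α Z Zᵀ)^{−1/2} − A^{−1/2}) is a solution of the algebraic Riccati equation A^{−1/2} C + C A^{−1/2} − α C² = V Vᵀ. -/

import Mathlib

open Matrix

section
open scoped ComplexOrder

/-- The positive semidefinite square root of a positive semidefinite matrix
(the definition Mathlib had in December 2024; it has since been removed). -/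
noncomputable def Matrix.PosSemidef.sqrt {n : Type*} [Fintype n] [DecidableEq n] {𝕜 : Type*}
    [RCLike 𝕜] {A : Matrix n n 𝕜} (hA : A.PosSemidef) : Matrix n n 𝕜 :=
  hA.1.eigenvectorUnitary.1 * diagonal ((↑) ∘ Real.sqrt ∘ hA.1.eigenvalues) *
  (star hA.1.eigenvectorUnitary : Matrix n n 𝕜)

end

lemma Matrix.PosSemidef.sqrt_mul_self {m : Type*} [Fintype m] [DecidableEq m]
    {A : Matrix m m ℝ} (hA : A.PosSemidef) : hA.sqrt * hA.sqrt = A := by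
  unfold Matrix.PosSemidef.sqrt
  set U := hA.1.eigenvectorUnitary
  have hU : (star U : Matrix m m ℝ) * (U : Matrix m m ℝ) = 1 := Unitary.coe_star_mul_self U
  have hD : diagonal ((↑) ∘ Real.sqrt ∘ hA.1.eigenvalues) *
      diagonal ((↑) ∘ Real.sqrt ∘ hA.1.eigenvalues) =
      diagonal (RCLike.ofReal ∘ hA.1.eigenvalues : m → ℝ) := by
    rw [diagonal_mul_diagonal]
    congr 1; funext i
    simp [Real.mul_self_sqrt (hA.eigenvalues_nonneg i)]
  calc (U : Matrix m m ℝ) * diagonal ((↑) ∘ Real.sqrt ∘ hA.1.eigenvalues) * (star U : Matrix m m ℝ) *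
        ((U : Matrix m m ℝ) * diagonal ((↑) ∘ Real.sqrt ∘ hA.1.eigenvalues) * (star U : Matrix m m ℝ))
        = (U : Matrix m m ℝ) * (diagonal ((↑) ∘ Real.sqrt ∘ hA.1.eigenvalues) *
          ((star U : Matrix m m ℝ) * (U : Matrix m m ℝ)) *
          diagonal ((↑) ∘ Real.sqrt ∘ hA.1.eigenvalues)) * (star U : Matrix m m ℝ) := by
          simp only [Matrix.mul_assoc]
    _ = A := by
      rw [hU, Matrix.mul_one, hD]
      conv_rhs => rw [hA.1.spectral_theorem]
      simp [Unitary.conjStarAlgAut_apply]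
      rfl

lemma Matrix.PosSemidef.posSemidef_sqrt {m : Type*} [Fintype m] [DecidableEq m]
    {A : Matrix m m ℝ} (hA : A.PosSemidef) : hA.sqrt.PosSemidef := by
  unfold Matrix.PosSemidef.sqrt
  refine (Matrix.IsUnit.posSemidef_star_right_conjugate_iff
    (Unitary.isUnit_coe (U := hA.1.eigenvectorUnitary))).mpr ?_
  refine Matrix.PosSemidef.diagonal (fun i => ?_)
  simp [Real.sqrt_nonneg]

lemma aux_posDef_of_posSemidef {m : Type*} [Fintype m] [DecidableEq m] {A : Matrix m m ℝ}
    (h : A.PosSemidef) (hd : IsUnit A) : A.PosDef := by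
  exact h.posDef_iff_isUnit.mpr hd

lemma aux_riccati_alg {n : ℕ} (α : ℝ) (hα : α = 1 ∨ α = -1) (s t : Matrix (Fin n) (Fin n) ℝ) :
    s * ((-α) • (t - s)) + ((-α) • (t - s)) * s - α • ((-α) • (t - s)) ^ 2 =
      α • (s * s) - α • (t * t) := by
  rcases hα with rfl | rfl <;>
    simp only [neg_neg, one_smul, neg_smul, smul_neg, neg_sub] <;> noncomm_ring

theorem inv_sqrt_correction_solves_riccati {n k : ℕ} (α : ℝ) (hα : α = 1 ∨ α = -1)
    (A : Matrix (Fin n) (Fin n) ℝ) (Z : Matrix (Fin n) (Fin k) ℝ)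
    (hA : A.PosDef) (hB : (A + α • (Z * Zᵀ)).PosDef) :
    ∃ h : ((1 : Matrix (Fin k) (Fin k) ℝ) + α • (Zᵀ * A⁻¹ * Z)).PosDef,
      (hA.posSemidef.sqrt)⁻¹ *
          ((-α) • ((hB.posSemidef.sqrt)⁻¹ - (hA.posSemidef.sqrt)⁻¹)) +
        ((-α) • ((hB.posSemidef.sqrt)⁻¹ - (hA.posSemidef.sqrt)⁻¹)) *
          (hA.posSemidef.sqrt)⁻¹ -
        α • ((-α) • ((hB.posSemidef.sqrt)⁻¹ - (hA.posSemidef.sqrt)⁻¹)) ^ 2 =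
      (A⁻¹ * Z * (h.posSemidef.sqrt)⁻¹) * (A⁻¹ * Z * (h.posSemidef.sqrt)⁻¹)ᵀ := by
  have hαα : α * α = 1 := by rcases hα with rfl | rfl <;> norm_num
  have hα0 : α ≠ 0 := by rcases hα with rfl | rfl <;> norm_num
  set B := A + α • (Z * Zᵀ) with hBdef
  set M := (1 : Matrix (Fin k) (Fin k) ℝ) + α • (Zᵀ * A⁻¹ * Z) with hMdef
  haveI : Invertible A := hA.isUnit.invertible
  haveI : Invertible (1 : Matrix (Fin k) (Fin k) ℝ) := invertibleOne
  -- M is positive semidefinite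
  have hMsemidef : M.PosSemidef := by
    rcases hα with rfl | rfl
    · rw [hMdef]
      simp only [one_smul]
      have : (Zᵀ * A⁻¹ * Z).PosSemidef := by
        have := hA.inv.posSemidef.conjTranspose_mul_mul_same Z
        rwa [conjTranspose_eq_transpose_of_trivial] at this
      exact Matrix.PosSemidef.one.add this
    · have hP : (fromBlocks A Z Zᴴ (1 : Matrix (Fin k) (Fin k) ℝ)).PosSemidef := by
        rw [Matrix.PosDef.fromBlocks₂₂ A Z Matrix.PosDef.one]
        rw [conjTranspose_eq_transpose_of_trivial, inv_one, Matrix.mul_one]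
        have h' : A - Z * Zᵀ = B := by rw [hBdef, neg_one_smul, ← sub_eq_add_neg]
        rw [h']; exact hB.posSemidef
      rw [Matrix.PosDef.fromBlocks₁₁ Z (1 : Matrix (Fin k) (Fin k) ℝ) hA,
        conjTranspose_eq_transpose_of_trivial] at hP
      have h' : M = 1 - Zᵀ * A⁻¹ * Z := by rw [hMdef, neg_one_smul, ← sub_eq_add_neg]
      rw [h']; exact hP
  -- M is a unit
  have hMunit : IsUnit M := by
    have h1 : M = 1 + Zᵀ * (α • (A⁻¹ * Z)) := by
      rw [hMdef, Matrix.mul_smul, Matrix.mul_assoc]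
    have h2 : (1 : Matrix (Fin n) (Fin n) ℝ) + (α • (A⁻¹ * Z)) * Zᵀ = A⁻¹ * B := by
      rw [hBdef, Matrix.mul_add, Matrix.mul_smul, inv_mul_of_invertible,
        Matrix.smul_mul, Matrix.mul_assoc]
    have hdet : M.det = (A⁻¹ * B).det := by
      rw [h1, Matrix.det_one_add_mul_comm, h2]
    rw [Matrix.isUnit_iff_isUnit_det, hdet, Matrix.det_mul]
    exact ((Matrix.isUnit_iff_isUnit_det _).mp (Matrix.isUnit_nonsing_inv_iff.mpr hA.isUnit)).mul
      ((Matrix.isUnit_iff_isUnit_det _).mp hB.isUnit)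
  have hM : M.PosDef := aux_posDef_of_posSemidef hMsemidef hMunit
  refine ⟨hM, ?_⟩
  -- Woodbury ingredients
  have hNinv : (α • (1 : Matrix (Fin k) (Fin k) ℝ))⁻¹ = α • 1 := by
    apply Matrix.inv_eq_right_inv
    rw [smul_mul_assoc, mul_smul_comm, smul_smul, hαα, Matrix.one_mul, one_smul]
  have hNM : α • (1 : Matrix (Fin k) (Fin k) ℝ) + Zᵀ * A⁻¹ * Z = α • M := by
    rw [hMdef, smul_add, smul_smul, hαα, one_smul]
  have hNMinv : (α • M)⁻¹ = α • M⁻¹ := by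
    apply Matrix.inv_eq_right_inv
    rw [smul_mul_assoc, mul_smul_comm, smul_smul, hαα, one_smul,
      Matrix.mul_nonsing_inv _ ((Matrix.isUnit_iff_isUnit_det _).mp hMunit)]
  have hαunit : IsUnit (α • (1 : Matrix (Fin k) (Fin k) ℝ)) := by
    rw [Matrix.isUnit_iff_isUnit_det, Matrix.det_smul, Matrix.det_one, mul_one]
    exact (pow_ne_zero _ hα0).isUnit
  have hαMunit : IsUnit (α • M) := by
    rw [Matrix.isUnit_iff_isUnit_det, Matrix.det_smul]
    exact (pow_ne_zero _ hα0).isUnit.mul ((Matrix.isUnit_iff_isUnit_det _).mp hMunit)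
  have hWood : B⁻¹ = A⁻¹ - α • (A⁻¹ * Z * M⁻¹ * (Zᵀ * A⁻¹)) := by
    have hB' : B = A + Z * (α • (1 : Matrix (Fin k) (Fin k) ℝ)) * Zᵀ := by
      rw [hBdef, Matrix.mul_smul, Matrix.mul_one, Matrix.smul_mul]
    rw [hB', Matrix.add_mul_mul_inv_eq_sub _ _ _ _ hA.isUnit hαunit
      (by rw [hNinv, hNM]; exact hαMunit), hNinv, hNM, hNMinv]
    rw [Matrix.mul_smul, Matrix.smul_mul, Matrix.smul_mul, Matrix.mul_assoc]
  -- square-root facts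
  have hS : (hA.posSemidef.sqrt)⁻¹ * (hA.posSemidef.sqrt)⁻¹ = A⁻¹ := by
    rw [← Matrix.mul_inv_rev, hA.posSemidef.sqrt_mul_self]
  have hT : (hB.posSemidef.sqrt)⁻¹ * (hB.posSemidef.sqrt)⁻¹ = B⁻¹ := by
    rw [← Matrix.mul_inv_rev, hB.posSemidef.sqrt_mul_self]
  have hR : (hM.posSemidef.sqrt)⁻¹ * (hM.posSemidef.sqrt)⁻¹ = M⁻¹ := by
    rw [← Matrix.mul_inv_rev, hM.posSemidef.sqrt_mul_self]
  have hRsym : ((hM.posSemidef.sqrt)⁻¹)ᵀ = (hM.posSemidef.sqrt)⁻¹ := by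
    rw [Matrix.transpose_nonsing_inv]
    congr 1
    have := hM.posSemidef.posSemidef_sqrt.isHermitian
    rwa [Matrix.IsHermitian, conjTranspose_eq_transpose_of_trivial] at this
  have hAsym : (A⁻¹)ᵀ = A⁻¹ := by
    rw [Matrix.transpose_nonsing_inv]
    congr 1
    have := hA.isHermitian
    rwa [Matrix.IsHermitian, conjTranspose_eq_transpose_of_trivial] at this
  rw [aux_riccati_alg α hα, hS, hT, hWood]
  rw [Matrix.transpose_mul, Matrix.transpose_mul, hRsym, hAsym]
  rw [smul_sub, smul_smul, hαα, one_smul, sub_sub_cancel]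
  rw [← hR]
  simp only [Matrix.mul_assoc]
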